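/- For every t > 1, the series C_2(t) := Σ_{n≥1} 2 t^{2n}/(1 - t^n)^4 converges, and as t → 1^+ one has C_2(t) = π^4/(45 (t-1)^4) + O((t-1)^{-3}). -/

import Mathlib

open Filter


private lemma exp_lb {y : ℝ} (hy : 0 < y) :
    y * Real.exp (y / 2) ≤ Real.exp y - 1 := by
  have h := (Real.self_lt_sinh_iff.mpr (by linarith : 0 < y / 2)).le
  rw [Real.sinh_eq] at h
  have h2 : Real.exp (y / 2) * Real.exp (y / 2) = Real.exp y := by
    rw [← Real.exp_add]; ring_nf
  have h3 : Real.exp (-(y / 2)) * Real.exp (y / 2) = 1 := by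
    rw [← Real.exp_add]; simp
  nlinarith [Real.exp_pos (y / 2)]

private lemma key_bounds {y : ℝ} (hy : 0 < y) :
    1 / y ^ 4 - 2 / y ^ 3 ≤ Real.exp (2 * y) / (Real.exp y - 1) ^ 4 ∧
    Real.exp (2 * y) / (Real.exp y - 1) ^ 4 ≤ 1 / y ^ 4 := by
  set e := Real.exp (y / 2) with he_def
  have he1 : 1 < e := by
    have := Real.add_one_le_exp (y / 2); simp only [he_def]; linarith
  have hE : Real.exp y = e ^ 2 := by
    rw [he_def, sq, ← Real.exp_add]; ring_nf
  have hE2 : Real.exp (2 * y) = e ^ 4 := by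
    have : e ^ 4 = Real.exp (y / 2) * Real.exp (y / 2) * Real.exp (y / 2) * Real.exp (y / 2) := by
      rw [he_def]; ring
    rw [this, ← Real.exp_add, ← Real.exp_add, ← Real.exp_add]; ring_nf
  have h1 : y * e ≤ e ^ 2 - 1 := by
    have := exp_lb hy; rw [hE] at this; exact this
  have he2 : (0:ℝ) < e ^ 2 := by positivity
  have he4 : (0:ℝ) < e ^ 4 := by positivity
  have h2 : e ^ 2 - 1 ≤ y * e ^ 2 := by
    have h := Real.add_one_le_exp (-y)
    have hn : Real.exp (-y) = 1 / e ^ 2 := by rw [Real.exp_neg, hE, one_div]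
    rw [hn, le_div_iff₀ he2] at h
    nlinarith
  have h3 : e ^ 4 - 1 ≤ 2 * y * e ^ 4 := by
    have h := Real.add_one_le_exp (-(2 * y))
    have hn : Real.exp (-(2 * y)) = 1 / e ^ 4 := by rw [Real.exp_neg, hE2, one_div]
    rw [hn, le_div_iff₀ he4] at h
    nlinarith
  have hy4 : (0:ℝ) < y ^ 4 := by positivity
  have hden : (0:ℝ) < (e ^ 2 - 1) ^ 4 := by
    have : (0:ℝ) < e ^ 2 - 1 := by nlinarith
    positivity
  have he0 : (0:ℝ) < e := by linarith
  constructor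
  · have expand : 1 / y ^ 4 - 2 / y ^ 3 = (1 - 2 * y) / y ^ 4 := by
      field_simp
    rw [hE, hE2, expand, div_le_div_iff₀ hy4 hden]
    -- goal : (1 - 2*y) * (e^2-1)^4 ≤ e^4 * y^4
    have L1 : (e ^ 2 - 1) ^ 4 ≤ (y * e ^ 2) ^ 4 :=
      pow_le_pow_left₀ (by nlinarith) h2 4
    have h4 : (1 - 2 * y) * e ^ 4 ≤ 1 := by nlinarith
    have step : (1 - 2 * y) * (e ^ 2 - 1) ^ 4 * e ^ 4 ≤ (e ^ 4 * y ^ 4) * e ^ 4 := by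
      calc (1 - 2 * y) * (e ^ 2 - 1) ^ 4 * e ^ 4
          = ((1 - 2 * y) * e ^ 4) * (e ^ 2 - 1) ^ 4 := by ring
        _ ≤ 1 * (e ^ 2 - 1) ^ 4 := mul_le_mul_of_nonneg_right h4 (le_of_lt hden)
        _ ≤ (y * e ^ 2) ^ 4 := by linarith [L1]
        _ = (e ^ 4 * y ^ 4) * e ^ 4 := by ring
    exact (mul_le_mul_iff_of_pos_right he4).mp step
  · rw [hE, hE2, div_le_div_iff₀ hden hy4]
    -- goal : e^4 * y^4 ≤ (e^2-1)^4 * 1... check orientation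
    have L0 : (y * e) ^ 4 ≤ (e ^ 2 - 1) ^ 4 :=
      pow_le_pow_left₀ (by positivity) h1 4
    nlinarith [L0]

private lemma per_t {t : ℝ} (ht : 1 < t) :
    Summable (fun n : ℕ => 2 * t ^ (2 * (n + 1)) / (1 - t ^ (n + 1)) ^ 4) ∧
    Real.pi ^ 4 / 45 * ((Real.log t)⁻¹) ^ 4
        - 4 * (∑' n : ℕ, 1 / ((n : ℝ) + 1) ^ 3) * ((Real.log t)⁻¹) ^ 3
      ≤ (∑' n : ℕ, 2 * t ^ (2 * (n + 1)) / (1 - t ^ (n + 1)) ^ 4) ∧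
    (∑' n : ℕ, 2 * t ^ (2 * (n + 1)) / (1 - t ^ (n + 1)) ^ 4)
      ≤ Real.pi ^ 4 / 45 * ((Real.log t)⁻¹) ^ 4 := by
  have ht0 : (0 : ℝ) < t := by linarith
  set x := Real.log t with hx_def
  have hx : 0 < x := Real.log_pos ht
  set a : ℕ → ℝ := fun n => 2 * t ^ (2 * (n + 1)) / (1 - t ^ (n + 1)) ^ 4 with ha_def
  set b : ℕ → ℝ := fun n => 2 / (((n : ℝ) + 1) * x) ^ 4 with hb_def
  set c : ℕ → ℝ := fun n => 4 / (((n : ℝ) + 1) * x) ^ 3 with hc_def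
  have hte : ∀ k : ℕ, t ^ k = Real.exp ((k : ℝ) * x) := by
    intro k
    rw [Real.exp_nat_mul, hx_def, Real.exp_log ht0]
  have ha_eq : ∀ n : ℕ, a n =
      2 * (Real.exp (2 * (((n : ℝ) + 1) * x)) / (Real.exp (((n : ℝ) + 1) * x) - 1) ^ 4) := by
    intro n
    have h1 : t ^ (n + 1) = Real.exp (((n : ℝ) + 1) * x) := by
      rw [hte (n + 1)]; push_cast; ring_nf
    have h2 : t ^ (2 * (n + 1)) = Real.exp (2 * (((n : ℝ) + 1) * x)) := by
      rw [hte (2 * (n + 1))]; push_cast; ring_nf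
    rw [ha_def]
    simp only [h1, h2]
    have : (1 - Real.exp (((n : ℝ) + 1) * x)) ^ 4
        = (Real.exp (((n : ℝ) + 1) * x) - 1) ^ 4 := by ring
    rw [this]; ring
  have hy : ∀ n : ℕ, 0 < ((n : ℝ) + 1) * x := by
    intro n; positivity
  have hkey : ∀ n : ℕ, b n - c n ≤ a n ∧ a n ≤ b n := by
    intro n
    obtain ⟨k1, k2⟩ := key_bounds (hy n)
    rw [ha_eq n, hb_def, hc_def]
    have eb : (2:ℝ) / (((n : ℝ) + 1) * x) ^ 4 = 2 * (1 / (((n : ℝ) + 1) * x) ^ 4) := by ring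
    have ec : (4:ℝ) / (((n : ℝ) + 1) * x) ^ 3 = 2 * (2 / (((n : ℝ) + 1) * x) ^ 3) := by ring
    constructor
    · simp only [eb, ec]
      linarith [k1]
    · simp only [eb]
      linarith [k2]
  have ha_nonneg : ∀ n : ℕ, 0 ≤ a n := by
    intro n; rw [ha_eq n]; positivity
  -- HasSum for b
  have hz4 : HasSum (fun n : ℕ => (1 : ℝ) / ((n : ℝ) + 1) ^ 4) (Real.pi ^ 4 / 90) := by
    have h := (hasSum_nat_add_iff' (f := fun n : ℕ => (1 : ℝ) / (n : ℝ) ^ 4) 1).mpr hasSum_zeta_four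
    simp only [Finset.range_one, Finset.sum_singleton, Nat.cast_zero] at h
    norm_num at h
    convert h using 2 with n
    case e'_5 => push_cast; ring
    case e'_3 => rfl
  have hz3 : Summable (fun n : ℕ => (1 : ℝ) / ((n : ℝ) + 1) ^ 3) := by
    have h := (summable_nat_add_iff (f := fun n : ℕ => (1 : ℝ) / (n : ℝ) ^ 3) 1).mpr
      (Real.summable_one_div_nat_pow.mpr (by norm_num))
    convert h using 2 with n
    case e'_5 => push_cast; ring
    case e'_3 => rfl
  have hx4 : (x : ℝ) ^ 4 ≠ 0 := by positivity
  have hx3 : (x : ℝ) ^ 3 ≠ 0 := by positivity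
  have hb_sum : HasSum b (Real.pi ^ 4 / 45 * (x⁻¹) ^ 4) := by
    have h := hz4.mul_left (2 / x ^ 4)
    have hfun : b = fun n : ℕ => 2 / x ^ 4 * (1 / ((n : ℝ) + 1) ^ 4) := by
      funext n; rw [hb_def]; simp only; rw [mul_pow]; field_simp
    have hval : Real.pi ^ 4 / 45 * (x⁻¹) ^ 4 = 2 / x ^ 4 * (Real.pi ^ 4 / 90) := by
      field_simp
      ring
    rw [hfun, hval]; exact h
  have hc_sum : HasSum c (4 / x ^ 3 * (∑' n : ℕ, 1 / ((n : ℝ) + 1) ^ 3)) := by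
    have h := hz3.hasSum.mul_left (4 / x ^ 3)
    have hfun : c = fun n : ℕ => 4 / x ^ 3 * (1 / ((n : ℝ) + 1) ^ 3) := by
      funext n; rw [hc_def]; simp only; rw [mul_pow]; field_simp
    rw [hfun]; exact h
  have hsa : Summable a :=
    Summable.of_nonneg_of_le ha_nonneg (fun n => (hkey n).2) hb_sum.summable
  refine ⟨hsa, ?_, ?_⟩
  · have hle : ∀ n : ℕ, b n - c n ≤ a n := fun n => (hkey n).1
    have h1 : (∑' n : ℕ, (b n - c n)) ≤ ∑' n : ℕ, a n :=
      Summable.tsum_le_tsum hle (hb_sum.summable.sub hc_sum.summable) hsa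
    rw [Summable.tsum_sub hb_sum.summable hc_sum.summable, hb_sum.tsum_eq, hc_sum.tsum_eq] at h1
    have : 4 / x ^ 3 * (∑' n : ℕ, 1 / ((n : ℝ) + 1) ^ 3)
        = 4 * (∑' n : ℕ, 1 / ((n : ℝ) + 1) ^ 3) * (x⁻¹) ^ 3 := by
      field_simp
    rw [this] at h1
    exact h1
  · have h2 : (∑' n : ℕ, a n) ≤ ∑' n : ℕ, b n :=
      Summable.tsum_le_tsum (fun n => (hkey n).2) hsa hb_sum.summable
    rwa [hb_sum.tsum_eq] at h2

/-- For `t > 1` the series `C₂(t) = Σ_{n≥1} 2 t^{2n}/(1-t^n)^4` converges, and as `t → 1⁺`,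
`C₂(t) = π⁴/(45 (t-1)⁴) + O((t-1)⁻³)`. -/
theorem stmt_4 :
    (∀ t : ℝ, 1 < t →
      Summable (fun n : ℕ => 2 * t ^ (2 * (n + 1)) / (1 - t ^ (n + 1)) ^ 4)) ∧
    Asymptotics.IsBigO (nhdsWithin 1 (Set.Ioi (1 : ℝ)))
      (fun t : ℝ =>
        (∑' n : ℕ, 2 * t ^ (2 * (n + 1)) / (1 - t ^ (n + 1)) ^ 4)
          - Real.pi ^ 4 / (45 * (t - 1) ^ 4))
      (fun t : ℝ => ((t - 1) ^ 3)⁻¹) := by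
  constructor
  · intro t ht; exact (per_t ht).1
  · rw [Asymptotics.isBigO_iff]
    set K := ∑' n : ℕ, 1 / ((n : ℝ) + 1) ^ 3 with hK_def
    have hK0 : 0 ≤ K := tsum_nonneg (fun n => by positivity)
    refine ⟨32 * K + Real.pi ^ 4 / 3, ?_⟩
    filter_upwards [Ioo_mem_nhdsGT_of_mem (show (1 : ℝ) ∈ Set.Ico 1 2 by norm_num)] with t htm
    obtain ⟨ht1, ht2⟩ := htm
    obtain ⟨-, lo, up⟩ := per_t ht1
    rw [← hK_def] at lo
    have ht0 : (0 : ℝ) < t := by linarith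
    set x := Real.log t with hx_def
    have hx : 0 < x := Real.log_pos ht1
    have hD : 0 < t - 1 := by linarith
    set u := x⁻¹ with hu_def
    set v := (t - 1)⁻¹ with hv_def
    have hv0 : 0 < v := inv_pos.mpr hD
    have hu0 : 0 < u := inv_pos.mpr hx
    have hDv : (t - 1) * v = 1 := mul_inv_cancel₀ (ne_of_gt hD)
    have hxle : x ≤ t - 1 := Real.log_le_sub_one_of_pos ht0
    have hvu : v ≤ u := by
      rw [hu_def, hv_def]
      exact inv_anti₀ hx hxle
    have hut : u ≤ t * v := by
      have hexp : Real.exp (-x) = t⁻¹ := by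
        rw [Real.exp_neg, hx_def, Real.exp_log ht0]
      have h := Real.add_one_le_exp (-x)
      rw [hexp] at h
      have hinv : t⁻¹ * t = 1 := inv_mul_cancel₀ (ne_of_gt ht0)
      have h' : (-x + 1) * t ≤ 1 := by
        calc (-x + 1) * t ≤ t⁻¹ * t := mul_le_mul_of_nonneg_right h ht0.le
          _ = 1 := hinv
      have hxge : (t - 1) / t ≤ x := by
        rw [div_le_iff₀ ht0]; nlinarith
      have hq : 0 < (t - 1) / t := div_pos hD ht0
      calc u = x⁻¹ := hu_def
        _ ≤ ((t - 1) / t)⁻¹ := inv_anti₀ hq hxge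
        _ = t * v := by rw [hv_def]; field_simp
    have hpoly : t ^ 4 - 1 ≤ 15 * (t - 1) := by
      nlinarith [mul_nonneg hD.le (show (0:ℝ) ≤ 2 - t by linarith),
        mul_nonneg (mul_nonneg hD.le hD.le) (show (0:ℝ) ≤ 2 - t by linarith),
        mul_nonneg (mul_nonneg (mul_nonneg hD.le hD.le) hD.le) (show (0:ℝ) ≤ 2 - t by linarith)]
    have hu4 : u ^ 4 ≤ (t * v) ^ 4 := pow_le_pow_left₀ hu0.le hut 4
    have hv4u : v ^ 4 ≤ u ^ 4 := pow_le_pow_left₀ hv0.le hvu 4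
    have hu3 : u ^ 3 ≤ (t * v) ^ 3 := pow_le_pow_left₀ hu0.le hut 3
    have hu3' : u ^ 3 ≤ 8 * v ^ 3 := by
      have ht3 : t ^ 3 ≤ 8 := by nlinarith
      have hv3 : (0 : ℝ) ≤ v ^ 3 := by positivity
      nlinarith [hu3]
    have hng : ((t - 1) ^ 3)⁻¹ = v ^ 3 := by rw [hv_def, inv_pow]
    have hval : Real.pi ^ 4 / (45 * (t - 1) ^ 4) = Real.pi ^ 4 / 45 * v ^ 4 := by
      have h4 : ((t - 1) ^ 4) ≠ 0 := by positivity
      rw [hv_def, inv_pow]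
      field_simp
    rw [Real.norm_eq_abs, Real.norm_eq_abs, hval, hng,
      abs_of_pos (show (0 : ℝ) < v ^ 3 by positivity)]
    set S := ∑' n : ℕ, 2 * t ^ (2 * (n + 1)) / (1 - t ^ (n + 1)) ^ 4 with hS_def
    have hKv : (0 : ℝ) ≤ K * v ^ 3 := mul_nonneg hK0 (by positivity)
    have hpiv : (0 : ℝ) ≤ Real.pi ^ 4 / 3 * v ^ 3 := by positivity
    rw [abs_le]
    constructor
    · -- lower :  -(c v^3) ≤ S - π^4/45 v^4
      have d1 : Real.pi ^ 4 / 45 * v ^ 4 ≤ Real.pi ^ 4 / 45 * u ^ 4 :=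
        mul_le_mul_of_nonneg_left hv4u (by positivity)
      have d2 : K * u ^ 3 ≤ K * (8 * v ^ 3) := mul_le_mul_of_nonneg_left hu3' hK0
      have hexp : -((32 * K + Real.pi ^ 4 / 3) * v ^ 3)
          = -(32 * (K * v ^ 3)) - Real.pi ^ 4 / 3 * v ^ 3 := by ring
      rw [hexp]
      have lo' : Real.pi ^ 4 / 45 * u ^ 4 - 4 * (K * u ^ 3) ≤ S := by
        rw [hS_def]; linarith [lo]
      linarith [lo', d1, d2, hKv, hpiv]
    · have c1 : Real.pi ^ 4 / 45 * u ^ 4 ≤ Real.pi ^ 4 / 45 * (t ^ 4 * v ^ 4) := by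
        calc Real.pi ^ 4 / 45 * u ^ 4 ≤ Real.pi ^ 4 / 45 * ((t * v) ^ 4) :=
              mul_le_mul_of_nonneg_left hu4 (by positivity)
          _ = Real.pi ^ 4 / 45 * (t ^ 4 * v ^ 4) := by ring
      have h3 : t ^ 4 * v ^ 4 - v ^ 4 ≤ 15 * v ^ 3 := by
        have e : (t - 1) * v ^ 4 = v ^ 3 := by
          calc (t - 1) * v ^ 4 = ((t - 1) * v) * v ^ 3 := by ring
            _ = v ^ 3 := by rw [hDv]; ring
        nlinarith [hpoly, pow_nonneg hv0.le 4, e]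
      have c2 : Real.pi ^ 4 / 45 * (t ^ 4 * v ^ 4) - Real.pi ^ 4 / 45 * v ^ 4
          ≤ Real.pi ^ 4 / 3 * v ^ 3 := by
        calc Real.pi ^ 4 / 45 * (t ^ 4 * v ^ 4) - Real.pi ^ 4 / 45 * v ^ 4
            = Real.pi ^ 4 / 45 * (t ^ 4 * v ^ 4 - v ^ 4) := by ring
          _ ≤ Real.pi ^ 4 / 45 * (15 * v ^ 3) := mul_le_mul_of_nonneg_left h3 (by positivity)
          _ = Real.pi ^ 4 / 3 * v ^ 3 := by ring
      have hexp : (32 * K + Real.pi ^ 4 / 3) * v ^ 3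
          = 32 * (K * v ^ 3) + Real.pi ^ 4 / 3 * v ^ 3 := by ring
      rw [hexp]
      have up' : S ≤ Real.pi ^ 4 / 45 * u ^ 4 := by rw [hS_def]; exact up
      linarith [up', c1, c2, hKv]
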